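/- Let n ≥ 1 be an integer. There exists a constant c > 0, depending only on n, such that for all real numbers ν and λ with ν > n − 1 and |λ| < ν − (n−1)/2, ∫_{0}^{∞} ∫_{ℝ^{n−1}} ( 4x₀ / ((1+x₀)² + ‖x₁‖²) )^{ν} · x₀^{λ − (n+1)/2} dx₁ dx₀ = c · Γ(ν + λ − (n−1)/2) Γ(ν − λ − (n−1)/2) / ( Γ(ν) Γ(ν + 1 − n/2) ). -/

import Mathlib

open MeasureTheory Real Set

lemma betaReal {a b : ℝ} (ha : 0 < a) (hb : 0 < b) :
    ∫ x in (0:ℝ)..1, x ^ (a - 1) * (1 - x) ^ (b - 1)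
      = Real.Gamma a * Real.Gamma b / Real.Gamma (a + b) := by
  have key := Complex.Gamma_mul_Gamma_eq_betaIntegral
    (s := (a : ℂ)) (t := (b : ℂ)) (by simpa using ha) (by simpa using hb)
  have hcast : Complex.betaIntegral (a : ℂ) (b : ℂ)
      = ((∫ x in (0:ℝ)..1, x ^ (a - 1) * (1 - x) ^ (b - 1) : ℝ) : ℂ) := by
    rw [Complex.betaIntegral, ← intervalIntegral.integral_ofReal]
    refine intervalIntegral.integral_congr fun x hx => ?_
    rw [uIcc_of_le (zero_le_one)] at hx
    rw [Complex.ofReal_mul, Complex.ofReal_cpow hx.1, Complex.ofReal_cpow (by linarith [hx.2])]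
    push_cast
    ring
  rw [hcast, ← Complex.ofReal_add, Complex.Gamma_ofReal, Complex.Gamma_ofReal,
    Complex.Gamma_ofReal, ← Complex.ofReal_mul, ← Complex.ofReal_mul] at key
  have := Complex.ofReal_injective key
  have hG : Real.Gamma (a + b) ≠ 0 := (Real.Gamma_pos_of_pos (by linarith)).ne'
  field_simp [this]
  linear_combination -this

lemma betaIoi {a b : ℝ} (ha : 0 < a) (hb : 0 < b) :
    ∫ t in Ioi (0:ℝ), t ^ (a - 1) * (1 + t) ^ (-(a + b))
      = Real.Gamma a * Real.Gamma b / Real.Gamma (a + b) := by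
  have himg : (fun u : ℝ => u / (1 - u)) '' Ioo 0 1 = Ioi 0 := by
    ext t
    constructor
    · rintro ⟨u, ⟨hu0, hu1⟩, rfl⟩
      exact div_pos hu0 (by linarith)
    · intro ht
      refine ⟨t / (1 + t), ⟨div_pos ht (by linarith [ht.out]), ?_⟩, ?_⟩
      · rw [div_lt_one (by linarith [ht.out])]; linarith [ht.out]
      · have h1 : (1:ℝ) + t ≠ 0 := by have := ht.out; positivity
        field_simp
        ring
  have hderiv : ∀ u ∈ Ioo (0:ℝ) 1, HasDerivWithinAt (fun u : ℝ => u / (1 - u))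
      (((1 - u) ^ 2)⁻¹) (Ioo 0 1) u := by
    intro u hu
    have h1 : (1:ℝ) - u ≠ 0 := by have := hu.2; intro h; linarith [sub_eq_zero.mp h]
    have := (hasDerivAt_id u).div ((hasDerivAt_const u 1).sub (hasDerivAt_id u)) h1
    convert this.hasDerivWithinAt using 1
    · rfl
    · rfl
    · rfl
    · simp only [Pi.sub_apply, id]; ring
  have hinj : InjOn (fun u : ℝ => u / (1 - u)) (Ioo 0 1) := by
    intro u hu v hv h
    have h1 : (1:ℝ) - u ≠ 0 := by have := hu.2; intro h; linarith [sub_eq_zero.mp h]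
    have h2 : (1:ℝ) - v ≠ 0 := by have := hv.2; intro h; linarith [sub_eq_zero.mp h]
    field_simp at h
    linarith
  rw [← himg, integral_image_eq_integral_abs_deriv_smul measurableSet_Ioo hderiv hinj]
  have heq : ∀ u ∈ Ioo (0:ℝ) 1,
      |((1 - u) ^ 2)⁻¹| • ((u / (1 - u)) ^ (a - 1) * (1 + u / (1 - u)) ^ (-(a + b)))
        = u ^ (a - 1) * (1 - u) ^ (b - 1) := by
    intro u hu
    have hu0 : 0 < u := hu.1
    have hu1 : 0 < 1 - u := by linarith [hu.2]
    have h3 : 1 + u / (1 - u) = (1 - u)⁻¹ := by field_simp; ring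
    rw [smul_eq_mul, h3, abs_of_pos (by positivity),
      Real.div_rpow hu0.le hu1.le, ← Real.rpow_neg_one (1 - u),
      ← Real.rpow_natCast (1 - u) 2, ← Real.rpow_neg hu1.le,
      ← Real.rpow_mul hu1.le, div_eq_mul_inv (u ^ (a-1)),
      ← Real.rpow_neg hu1.le]
    rw [show (-1 : ℝ) * -(a + b) = a + b by ring,
      show ((1:ℝ)-u) ^ (-((2:ℕ):ℝ)) * (u ^ (a - 1) * (1 - u) ^ (-(a - 1)) * (1 - u) ^ (a + b))
        = u ^ (a-1) * ((1-u) ^ (-((2:ℕ):ℝ)) * (1-u) ^ (-(a-1)) * (1-u) ^ (a+b)) from by ring,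
      ← Real.rpow_add hu1, ← Real.rpow_add hu1,
      show -((2:ℕ):ℝ) + -(a - 1) + (a + b) = b - 1 by push_cast; ring]
  rw [setIntegral_congr_fun measurableSet_Ioo heq, ← integral_Ioc_eq_integral_Ioo,
    ← intervalIntegral.integral_of_le zero_le_one, betaReal ha hb]

lemma Jint (d : ℕ) {ν : ℝ} (hν : (d : ℝ) / 2 < ν) :
    ∫ x : EuclideanSpace ℝ (Fin d), (1 + ‖x‖ ^ 2) ^ (-ν)
      = √π ^ d * Real.Gamma (ν - d / 2) / Real.Gamma ν := by
  have hν0 : 0 < ν := lt_of_le_of_lt (by positivity) hν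
  rcases Nat.eq_zero_or_pos d with rfl | hd
  · have hc : ∀ x : EuclideanSpace ℝ (Fin 0), (1 + ‖x‖ ^ 2) ^ (-ν) = 1 := by
      intro x
      have : ‖x‖ = 0 := by simp [EuclideanSpace.norm_eq]
      simp [this]
    rw [integral_congr_ae (Filter.Eventually.of_forall hc), integral_const, smul_eq_mul, mul_one]
    have huniv : (volume : Measure (EuclideanSpace ℝ (Fin 0))) univ = 1 := by
      rw [← ((EuclideanSpace.volume_preserving_symm_measurableEquiv_toLp
        (ι := Fin 0)).symm).measure_preimage MeasurableSet.univ.nullMeasurableSet]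
      simp [volume_pi, Measure.pi_univ]
    rw [Measure.real, huniv]
    simp [div_self (Real.Gamma_pos_of_pos hν0).ne']
  · haveI : Nonempty (Fin d) := ⟨⟨0, hd⟩⟩
    haveI : Nontrivial (EuclideanSpace ℝ (Fin d)) := by
      refine ⟨EuclideanSpace.single ⟨0, hd⟩ 1, 0, fun h => one_ne_zero (α := ℝ) ?_⟩
      simpa using congrFun (congrArg (fun v : EuclideanSpace ℝ (Fin d) => (v : Fin d → ℝ)) h) ⟨0, hd⟩
    rw [integral_fun_norm_addHaar (volume : Measure (EuclideanSpace ℝ (Fin d)))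
      (fun r => (1 + r ^ 2) ^ (-ν))]
    have hdim : Module.finrank ℝ (EuclideanSpace ℝ (Fin d)) = d := finrank_euclideanSpace_fin
    rw [hdim]
    have hsub := integral_comp_rpow_Ioi_of_pos
      (g := fun t : ℝ => (1/2 : ℝ) * (t ^ ((d:ℝ)/2 - 1) * (1 + t) ^ (-ν))) (p := 2) two_pos
    have hpt : ∀ y ∈ Ioi (0:ℝ), y ^ (d - 1) • (1 + y ^ 2) ^ (-ν)
        = (2 * y ^ ((2:ℝ) - 1)) • ((1/2 : ℝ) * ((y ^ (2:ℝ)) ^ ((d:ℝ)/2 - 1) * (1 + y ^ (2:ℝ)) ^ (-ν))) := by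
      intro y hy
      have hy0 : (0:ℝ) < y := hy
      have e1 : y ^ ((2:ℝ) - 1) = y := by norm_num
      have e2 : (y ^ (2:ℝ)) ^ ((d:ℝ)/2 - 1) = y ^ ((d:ℝ) - 2) := by
        rw [← Real.rpow_mul hy0.le]; ring_nf
      have e3 : y ^ (2:ℝ) = y ^ (2:ℕ) := by
        rw [show (2:ℝ) = ((2:ℕ):ℝ) by norm_num, Real.rpow_natCast]
      have e4 : y ^ (d - 1 : ℕ) = y ^ ((d:ℝ) - 1) := by
        rw [← Real.rpow_natCast y (d-1), Nat.cast_sub hd, Nat.cast_one]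
      rw [smul_eq_mul, smul_eq_mul, e1, e2, e3, e4]
      rw [show (2:ℝ) * y * (1/2 * (y ^ ((d:ℝ)-2) * (1 + y^(2:ℕ)) ^ (-ν)))
          = (y ^ (1:ℝ) * y ^ ((d:ℝ)-2)) * (1 + y^(2:ℕ)) ^ (-ν) by rw [Real.rpow_one]; ring,
        ← Real.rpow_add hy0, show (1:ℝ) + ((d:ℝ)-2) = (d:ℝ)-1 by ring]
    rw [setIntegral_congr_fun measurableSet_Ioi hpt, hsub, integral_const_mul,
      show -ν = -((d:ℝ)/2 + (ν - (d:ℝ)/2)) by ring,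
      betaIoi (a := (d:ℝ)/2) (b := ν - (d:ℝ)/2) (by positivity) (by linarith),
      show (d:ℝ)/2 + (ν - (d:ℝ)/2) = ν by ring]
    rw [Measure.real, EuclideanSpace.volume_ball, ENNReal.toReal_mul, Fintype.card_fin]
    rw [ENNReal.ofReal_one, one_pow, ENNReal.toReal_one, one_mul,
      ENNReal.toReal_ofReal (by positivity)]
    have hgd : Real.Gamma ((d:ℝ)/2 + 1) = (d:ℝ)/2 * Real.Gamma ((d:ℝ)/2) :=
      Real.Gamma_add_one (by positivity)
    have h1 : Real.Gamma ((d:ℝ)/2) ≠ 0 := (Real.Gamma_pos_of_pos (by positivity)).ne'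
    have h2 : Real.Gamma ν ≠ 0 := (Real.Gamma_pos_of_pos hν0).ne'
    rw [nsmul_eq_mul, hgd]
    have hd' : (0:ℝ) < (d:ℝ) := by exact_mod_cast hd
    field_simp
    ring_nf
    field_simp

lemma Jscaled (d : ℕ) {ν A : ℝ} (hν : (d : ℝ) / 2 < ν) (hA : 0 < A) :
    ∫ x : EuclideanSpace ℝ (Fin d), (A ^ 2 + ‖x‖ ^ 2) ^ (-ν)
      = A ^ ((d : ℝ) - 2 * ν) * (√π ^ d * Real.Gamma (ν - d / 2) / Real.Gamma ν) := by
  have key : ∀ x : EuclideanSpace ℝ (Fin d),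
      (A ^ 2 + ‖x‖ ^ 2) ^ (-ν) = A ^ (-(2 * ν)) * (1 + ‖A⁻¹ • x‖ ^ 2) ^ (-ν) := by
    intro x
    have hn : ‖A⁻¹ • x‖ = A⁻¹ * ‖x‖ := by
      rw [norm_smul, Real.norm_eq_abs, abs_of_pos (by positivity)]
    have h1 : 1 + ‖A⁻¹ • x‖ ^ 2 = (A ^ 2)⁻¹ * (A ^ 2 + ‖x‖ ^ 2) := by
      rw [hn]; field_simp
    rw [h1, Real.mul_rpow (by positivity) (by positivity), ← Real.rpow_natCast A 2,
      ← Real.rpow_neg_one (A ^ ((2:ℕ):ℝ)), ← Real.rpow_mul hA.le, ← Real.rpow_mul hA.le,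
      ← mul_assoc, ← Real.rpow_add hA]
    norm_num
  rw [integral_congr_ae (Filter.Eventually.of_forall key), integral_const_mul,
    Measure.integral_comp_inv_smul_of_nonneg volume (fun y : EuclideanSpace ℝ (Fin d) =>
      (1 + ‖y‖ ^ 2) ^ (-ν)) hA.le, Jint d hν, finrank_euclideanSpace_fin]
  rw [smul_eq_mul, ← mul_assoc, ← Real.rpow_natCast A d, ← Real.rpow_add hA]
  ring_nf

/-- The spherical Fourier transform of the Berezin function on real hyperbolic
`n`-space (half-space model): there is a constant `c > 0` depending only on `n` such
that for `ν > n−1` and `|λ| < ν − (n−1)/2`,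
`∫₀^∞ ∫_{ℝ^{n−1}} (4x₀/((1+x₀)²+‖x₁‖²))^ν x₀^{λ−(n+1)/2} dx₁ dx₀
  = c Γ(ν+λ−(n−1)/2) Γ(ν−λ−(n−1)/2) / (Γ(ν) Γ(ν+1−n/2))`. -/
theorem spherical_fourier_berezin_hyperbolic (n : ℕ) (hn : 1 ≤ n) :
    ∃ c : ℝ, 0 < c ∧ ∀ ν l : ℝ, (n : ℝ) - 1 < ν → |l| < ν - ((n : ℝ) - 1) / 2 →
      (∫ x₀ in Set.Ioi (0 : ℝ), ∫ x₁ : EuclideanSpace ℝ (Fin (n - 1)),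
          (4 * x₀ / ((1 + x₀) ^ 2 + ‖x₁‖ ^ 2)) ^ ν * x₀ ^ (l - ((n : ℝ) + 1) / 2))
        = c * (Real.Gamma (ν + l - ((n : ℝ) - 1) / 2)
            * Real.Gamma (ν - l - ((n : ℝ) - 1) / 2))
          / (Real.Gamma ν * Real.Gamma (ν + 1 - (n : ℝ) / 2)) := by

  refine ⟨2 ^ n * √π ^ n, by positivity, ?_⟩
  intro ν l hν hl
  have hn1 : (1:ℝ) ≤ (n:ℝ) := by exact_mod_cast hn
  have hdc : ((n - 1 : ℕ) : ℝ) = (n : ℝ) - 1 := by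
    rw [Nat.cast_sub hn, Nat.cast_one]
  have hν0 : 0 < ν := by linarith
  have hz : 0 < ν - ((n:ℝ) - 1) / 2 := by linarith
  obtain ⟨hl1, hl2⟩ := abs_lt.mp hl
  have ha : 0 < ν + l - ((n:ℝ) - 1) / 2 := by linarith
  have hb : 0 < ν - l - ((n:ℝ) - 1) / 2 := by linarith
  have hd2 : ((n - 1 : ℕ) : ℝ) / 2 < ν := by rw [hdc]; linarith
  have inner : ∀ x₀ ∈ Ioi (0:ℝ),
      (∫ x₁ : EuclideanSpace ℝ (Fin (n - 1)),
          (4 * x₀ / ((1 + x₀) ^ 2 + ‖x₁‖ ^ 2)) ^ ν * x₀ ^ (l - ((n : ℝ) + 1) / 2))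
        = ((4:ℝ) ^ ν * (√π ^ (n - 1) * Real.Gamma (ν - ((n - 1 : ℕ) : ℝ) / 2) / Real.Gamma ν))
          * (x₀ ^ ((ν + l - ((n:ℝ) - 1) / 2) - 1)
            * (1 + x₀) ^ (-((ν + l - ((n:ℝ) - 1) / 2) + (ν - l - ((n:ℝ) - 1) / 2)))) := by
    intro x₀ hx₀
    have hx : (0:ℝ) < x₀ := hx₀
    have hA : (0:ℝ) < 1 + x₀ := by linarith
    have pt : ∀ x₁ : EuclideanSpace ℝ (Fin (n - 1)),
        (4 * x₀ / ((1 + x₀) ^ 2 + ‖x₁‖ ^ 2)) ^ ν * x₀ ^ (l - ((n : ℝ) + 1) / 2)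
          = ((4:ℝ) ^ ν * x₀ ^ (ν + l - ((n:ℝ) + 1) / 2)) * ((1 + x₀) ^ 2 + ‖x₁‖ ^ 2) ^ (-ν) := by
      intro x₁
      have hD : (0:ℝ) < (1 + x₀) ^ 2 + ‖x₁‖ ^ 2 := by positivity
      rw [Real.div_rpow (by positivity) hD.le, Real.mul_rpow (by norm_num) hx.le,
        div_eq_mul_inv, ← Real.rpow_neg hD.le,
        show ν + l - ((n:ℝ) + 1) / 2 = ν + (l - ((n:ℝ) + 1) / 2) by ring, Real.rpow_add hx]
      ring
    rw [integral_congr_ae (Filter.Eventually.of_forall pt), integral_const_mul,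
      Jscaled (n - 1) hd2 hA,
      show (ν + l - ((n:ℝ) - 1) / 2) - 1 = ν + l - ((n:ℝ) + 1) / 2 by ring,
      show -((ν + l - ((n:ℝ) - 1) / 2) + (ν - l - ((n:ℝ) - 1) / 2))
        = ((n - 1 : ℕ) : ℝ) - 2 * ν by rw [hdc]; ring]
    ring
  rw [setIntegral_congr_fun measurableSet_Ioi inner, integral_const_mul, betaIoi ha hb,
    show (ν + l - ((n:ℝ) - 1) / 2) + (ν - l - ((n:ℝ) - 1) / 2)
      = 2 * (ν - ((n:ℝ) - 1) / 2) by ring]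
  -- final algebra
  have hdup := Real.Gamma_mul_Gamma_add_half (ν - ((n:ℝ) - 1) / 2)
  rw [show ν + 1 - (n:ℝ) / 2 = (ν - ((n:ℝ) - 1) / 2) + 1 / 2 by ring, hdc,
    show ν - ((n:ℝ) - 1) / 2 = ν - ((n:ℝ) - 1) / 2 from rfl]
  have key : (4:ℝ) ^ ν * ((2:ℝ) ^ (1 - 2 * (ν - ((n:ℝ) - 1) / 2)) * √π) * √π ^ (n - 1)
      = 2 ^ n * √π ^ n := by
    have h4 : (4:ℝ) ^ ν = (2:ℝ) ^ (2 * ν) := by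
      rw [show (4:ℝ) = (2:ℝ) ^ (2:ℕ) by norm_num, ← Real.rpow_natCast 2 2,
        ← Real.rpow_mul (by norm_num)]
      norm_num
    rw [h4, ← mul_assoc, ← Real.rpow_add two_pos,
      show 2 * ν + (1 - 2 * (ν - ((n:ℝ) - 1) / 2)) = (n:ℝ) by ring,
      Real.rpow_natCast, mul_assoc, mul_comm (√π) (√π ^ (n-1)), ← pow_succ,
      Nat.sub_add_cancel hn]
  set S := √π with hS
  set Ga := Real.Gamma (ν + l - ((n:ℝ) - 1) / 2) with hGa
  set Gb := Real.Gamma (ν - l - ((n:ℝ) - 1) / 2) with hGb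
  set Gz := Real.Gamma (ν - ((n:ℝ) - 1) / 2) with hGz'
  set Gz2 := Real.Gamma (ν - ((n:ℝ) - 1) / 2 + 1 / 2) with hGz2'
  set Gν := Real.Gamma ν with hGν'
  set G2z := Real.Gamma (2 * (ν - ((n:ℝ) - 1) / 2)) with hG2z'
  set P := (2:ℝ) ^ (1 - 2 * (ν - ((n:ℝ) - 1) / 2)) with hP
  have hGz : 0 < Gz := Real.Gamma_pos_of_pos hz
  have hGz2 : 0 < Gz2 := Real.Gamma_pos_of_pos (by linarith)
  have hGν : 0 < Gν := Real.Gamma_pos_of_pos hν0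
  have hG2z : 0 < G2z := Real.Gamma_pos_of_pos (by linarith)
  have hr : (0:ℝ) < P := Real.rpow_pos_of_pos two_pos _
  have hπ : (0:ℝ) < S := Real.sqrt_pos.mpr Real.pi_pos
  field_simp
  linear_combination ((4:ℝ) ^ ν * S ^ (n - 1) * Ga * Gb) * hdup
    + (Ga * Gb * G2z) * key
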